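/- arXiv:1810.07211 — 2 statements merged into one kernel-verified Lean document; each statement's English description precedes it below -/
import Mathlib

section
/- Let H be a symmetric n×n matrix with λ_min(H) ≥ -ε^{1/2} for ε > 0, let g ∈ ℝⁿ be nonzero, and let d be the regularized Newton direction solving (H + (‖g‖^{1/2} + ε^{1/2}) I) d = -g. Then ‖d‖ ≤ ‖g‖^{1/2}. -/
open scoped RealInnerProductSpace

/-- If the minimum eigenvalue `lam` of a symmetric matrix `H` satisfies `lam ≥ -ε^{1/2}`,
`g ≠ 0`, and `d` solves the regularized Newton system
`(H + (‖g‖^{1/2} + ε^{1/2}) I) d = -g`, then `‖d‖ ≤ ‖g‖^{1/2}`. -/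
theorem stmt5 {n : ℕ} (H : Matrix (Fin n) (Fin n) ℝ) (hH : H.IsHermitian)
    (g d : EuclideanSpace ℝ (Fin n)) (ε : ℝ) (hε : 0 < ε) (hg : 0 < ‖g‖) (lam : ℝ)
    (hlam_min : ∀ v : EuclideanSpace ℝ (Fin n), ‖v‖ = 1 →
      lam ≤ ⟪Matrix.toEuclideanCLM (𝕜 := ℝ) H v, v⟫)
    (hlam_attain : ∃ v : EuclideanSpace ℝ (Fin n), ‖v‖ = 1 ∧
      ⟪Matrix.toEuclideanCLM (𝕜 := ℝ) H v, v⟫ = lam)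
    (hlam : -Real.sqrt ε ≤ lam)
    (hd : Matrix.toEuclideanCLM (𝕜 := ℝ)
      (H + (Real.sqrt ‖g‖ + Real.sqrt ε) • (1 : Matrix (Fin n) (Fin n) ℝ)) d = -g) :
    ‖d‖ ≤ Real.sqrt ‖g‖ := by
  by_cases hd0 : d = 0
  · simp [hd0]
  have hdpos : 0 < ‖d‖ := norm_pos_iff.mpr hd0
  set c := Real.sqrt ‖g‖ + Real.sqrt ε with hc
  have hmap : Matrix.toEuclideanCLM (𝕜 := ℝ) H d + c • d = -g := by
    rw [← hd]
    simp [map_add, map_smul]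
  -- quadratic lower bound
  have hquad : lam * ‖d‖ ^ 2 ≤ ⟪Matrix.toEuclideanCLM (𝕜 := ℝ) H d, d⟫ := by
    have hunit : ‖(‖d‖⁻¹ • d : EuclideanSpace ℝ (Fin n))‖ = 1 := by
      simp [norm_smul, abs_of_pos hdpos, inv_mul_cancel₀ hdpos.ne']
    have h1 := hlam_min (‖d‖⁻¹ • d) hunit
    have h2 : ⟪Matrix.toEuclideanCLM (𝕜 := ℝ) H (‖d‖⁻¹ • d), (‖d‖⁻¹ • d : EuclideanSpace ℝ (Fin n))⟫
        = ‖d‖⁻¹ * (‖d‖⁻¹ * ⟪Matrix.toEuclideanCLM (𝕜 := ℝ) H d, d⟫) := by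
      rw [map_smul, real_inner_smul_left, real_inner_smul_right]
    rw [h2] at h1
    have h3 := mul_le_mul_of_nonneg_right h1 (sq_nonneg ‖d‖)
    have h5 : ‖d‖⁻¹ * (‖d‖⁻¹ * ⟪Matrix.toEuclideanCLM (𝕜 := ℝ) H d, d⟫) * ‖d‖ ^ 2
        = ⟪Matrix.toEuclideanCLM (𝕜 := ℝ) H d, d⟫ := by
      field_simp
    rw [h5] at h3
    exact h3
  have hinner : ⟪Matrix.toEuclideanCLM (𝕜 := ℝ) H d, d⟫ + c * ‖d‖ ^ 2 ≤ ‖g‖ * ‖d‖ := by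
    have heq : ⟪Matrix.toEuclideanCLM (𝕜 := ℝ) H d + c • d, d⟫ = ⟪(-g : EuclideanSpace ℝ (Fin n)), d⟫ := by
      rw [hmap]
    rw [inner_add_left, real_inner_smul_left, real_inner_self_eq_norm_sq] at heq
    have hb := real_inner_le_norm (-g) d
    rw [norm_neg] at hb
    linarith [heq.le, heq.ge, hb]
  have hlow : Real.sqrt ‖g‖ * ‖d‖ ^ 2 ≤ ‖g‖ * ‖d‖ := by
    nlinarith [hquad, hinner, sq_nonneg ‖d‖, hlam, Real.sqrt_nonneg ε]
  have hgs : Real.sqrt ‖g‖ * Real.sqrt ‖g‖ = ‖g‖ := Real.mul_self_sqrt hg.le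
  have hsp : 0 < Real.sqrt ‖g‖ * ‖d‖ := mul_pos (Real.sqrt_pos.mpr hg) hdpos
  have hkey : Real.sqrt ‖g‖ * ‖d‖ * ‖d‖ ≤ Real.sqrt ‖g‖ * ‖d‖ * Real.sqrt ‖g‖ := by
    nlinarith [hlow, hgs]
  exact le_of_mul_le_mul_left hkey hsp
end

section
/- Let m : ℝⁿ → ℝ be twice differentiable with L_H-Lipschitz Hessian, and suppose d ∈ ℝⁿ satisfies ∇m(x)ᵀd ≤ 0, dᵀ∇²m(x)d = -‖d‖³ (i.e., d is a negative-curvature direction with Hd = λd, ‖d‖ = -λ). Then for every α ∈ (0, 3/(L_H + η)] with η > 0: m(x + αd) - m(x) ≤ -(η/6)α³‖d‖³. -/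
open scoped RealInnerProductSpace

open Set in
/-- 1-D cubic bound: if `g'' t ≤ g'' 0 + C t` on `[0, α]`, then
`g α ≤ g 0 + α g'(0) + α²/2 g''(0) + C α³/6`. -/
lemma cubic_taylor_bound (g g1 g2 : ℝ → ℝ) (C α : ℝ) (hα : 0 ≤ α)
    (hg : ∀ t, HasDerivAt g (g1 t) t) (hg1 : ∀ t, HasDerivAt g1 (g2 t) t)
    (hC : ∀ t ∈ Icc (0:ℝ) α, g2 t ≤ g2 0 + C * t) :
    g α ≤ g 0 + α * g1 0 + α ^ 2 / 2 * g2 0 + C * α ^ 3 / 6 := by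
  set p : ℝ → ℝ := fun t => g1 t - g1 0 - t * g2 0 - C * t ^ 2 / 2 with hp
  have hp' : ∀ t, HasDerivAt p (g2 t - g2 0 - C * t) t := by
    intro t
    have h := (((hg1 t).sub (hasDerivAt_const t (g1 0))).sub
        ((hasDerivAt_id t).mul_const (g2 0))).sub
        (((hasDerivAt_pow 2 t).const_mul C).div_const 2)
    have : HasDerivAt p (g2 t - 0 - 1 * g2 0 - C * (↑2 * t ^ (2 - 1)) / 2) t := h
    convert this using 1
    push_cast; ring
  have hpanti : AntitoneOn p (Icc 0 α) := by
    apply antitoneOn_of_deriv_nonpos (convex_Icc 0 α)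
    · exact fun t _ => ((hp' t).continuousAt).continuousWithinAt
    · exact fun t _ => ((hp' t).differentiableAt).differentiableWithinAt
    · intro t ht
      rw [interior_Icc] at ht
      rw [(hp' t).deriv]
      have := hC t ⟨ht.1.le, ht.2.le⟩
      linarith
  have hpnonpos : ∀ t ∈ Icc (0:ℝ) α, p t ≤ 0 := by
    intro t ht
    have h0 : p 0 = 0 := by simp [hp]
    have := hpanti (left_mem_Icc.mpr hα) ht ht.1
    linarith
  set q : ℝ → ℝ := fun t => g t - g 0 - t * g1 0 - t ^ 2 / 2 * g2 0 - C * t ^ 3 / 6 with hq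
  have hq' : ∀ t, HasDerivAt q (p t) t := by
    intro t
    have h := ((((hg t).sub (hasDerivAt_const t (g 0))).sub
        ((hasDerivAt_id t).mul_const (g1 0))).sub
        (((hasDerivAt_pow 2 t).div_const 2).mul_const (g2 0))).sub
        (((hasDerivAt_pow 3 t).const_mul C).div_const 6)
    have : HasDerivAt q
        (g1 t - 0 - 1 * g1 0 - ↑2 * t ^ (2 - 1) / 2 * g2 0 - C * (↑3 * t ^ (3 - 1)) / 6) t := h
    convert this using 1
    simp only [hp]
    push_cast; ring
  have hqanti : AntitoneOn q (Icc 0 α) := by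
    apply antitoneOn_of_deriv_nonpos (convex_Icc 0 α)
    · exact fun t _ => ((hq' t).continuousAt).continuousWithinAt
    · exact fun t _ => ((hq' t).differentiableAt).differentiableWithinAt
    · intro t ht
      rw [interior_Icc] at ht
      rw [(hq' t).deriv]
      exact hpnonpos t ⟨ht.1.le, ht.2.le⟩
  have h0 : q 0 = 0 := by simp [hq]
  have := hqanti (left_mem_Icc.mpr hα) (right_mem_Icc.mpr hα) hα
  simp only [hq] at this h0
  linarith

/-- Decrease of an `L_H`-Lipschitz-Hessian model along a negative curvature direction:
if `∇m(x)ᵀd ≤ 0` and `dᵀ∇²m(x)d = -‖d‖³`, then for `0 < α ≤ 3/(L_H + η)` one has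
`m(x + αd) - m(x) ≤ -(η/6)α³‖d‖³`. -/
theorem stmt17 {n : ℕ} (m : EuclideanSpace ℝ (Fin n) → ℝ) (LH η : ℝ) (hη : 0 < η)
    (hm : ContDiff ℝ 2 m)
    (hlip : ∀ x y : EuclideanSpace ℝ (Fin n),
      ‖iteratedFDeriv ℝ 2 m x - iteratedFDeriv ℝ 2 m y‖ ≤ LH * ‖x - y‖)
    (x d : EuclideanSpace ℝ (Fin n))
    (hgd : ⟪gradient m x, d⟫ ≤ 0)
    (hcurv : iteratedFDeriv ℝ 2 m x ![d, d] = -‖d‖ ^ 3)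
    (α : ℝ) (hα0 : 0 < α) (hα1 : α ≤ 3 / (LH + η)) :
    m (x + α • d) - m x ≤ -(η / 6) * α ^ 3 * ‖d‖ ^ 3 := by
  have hsum : 0 < LH + η := by
    by_contra h
    push_neg at h
    have : 3 / (LH + η) ≤ 0 := div_nonpos_of_nonneg_of_nonpos (by norm_num) h
    linarith
  set c : ℝ → EuclideanSpace ℝ (Fin n) := fun t => x + t • d with hcdef
  have hc : ∀ t, HasDerivAt c d t := by
    intro t
    have : HasDerivAt (fun t : ℝ => x + t • d) (0 + (1:ℝ) • d) t :=
      (hasDerivAt_const t x).add ((hasDerivAt_id t).smul_const d)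
    rw [zero_add, one_smul] at this; exact this
  have hm1 : Differentiable ℝ m := hm.differentiable (by norm_num)
  have hm2 : ContDiff ℝ 1 (fderiv ℝ m) := hm.fderiv_right (le_refl 2)
  set g : ℝ → ℝ := fun t => m (c t) with hgdef
  set g1 : ℝ → ℝ := fun t => fderiv ℝ m (c t) d with hg1def
  set g2 : ℝ → ℝ := fun t => fderiv ℝ (fderiv ℝ m) (c t) d d with hg2def
  have hg : ∀ t, HasDerivAt g (g1 t) t := fun t =>
    ((hm1 (c t)).hasFDerivAt).comp_hasDerivAt t (hc t)
  have hg1 : ∀ t, HasDerivAt g1 (g2 t) t := by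
    intro t
    have hF : HasDerivAt (fun t => fderiv ℝ m (c t)) (fderiv ℝ (fderiv ℝ m) (c t) d) t :=
      ((hm2.differentiable (by norm_num) (c t)).hasFDerivAt).comp_hasDerivAt t (hc t)
    have := hF.clm_apply (hasDerivAt_const t d)
    simpa using this
  have hiter : ∀ y : EuclideanSpace ℝ (Fin n),
      fderiv ℝ (fderiv ℝ m) y d d = iteratedFDeriv ℝ 2 m y ![d, d] := by
    intro y
    rw [iteratedFDeriv_two_apply]
    simp
  set C := LH * ‖d‖ ^ 3 with hCdef
  have hC : ∀ t ∈ Set.Icc (0:ℝ) α, g2 t ≤ g2 0 + C * t := by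
    intro t ht
    have key : g2 t - g2 0 ≤ ‖iteratedFDeriv ℝ 2 m (c t) - iteratedFDeriv ℝ 2 m (c 0)‖
        * (‖d‖ * ‖d‖) := by
      have := (iteratedFDeriv ℝ 2 m (c t) - iteratedFDeriv ℝ 2 m (c 0)).le_opNorm ![d, d]
      simp only [ContinuousMultilinearMap.sub_apply] at this
      have hprod : (∏ i, ‖(![d, d] : Fin 2 → EuclideanSpace ℝ (Fin n)) i‖) = ‖d‖ * ‖d‖ := by
        simp [Fin.prod_univ_two]
      rw [hprod] at this
      have habs : |g2 t - g2 0| ≤ ‖iteratedFDeriv ℝ 2 m (c t) - iteratedFDeriv ℝ 2 m (c 0)‖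
          * (‖d‖ * ‖d‖) := by
        simpa [hg2def, hiter, Real.norm_eq_abs] using this
      exact le_trans (le_abs_self _) habs
    have hnorm : ‖iteratedFDeriv ℝ 2 m (c t) - iteratedFDeriv ℝ 2 m (c 0)‖
        ≤ LH * (t * ‖d‖) := by
      have h1 := hlip (c t) (c 0)
      have h2 : c t - c 0 = t • d := by simp [hcdef]
      rw [h2, norm_smul, Real.norm_eq_abs, abs_of_nonneg ht.1] at h1
      exact h1
    have hdn : (0:ℝ) ≤ ‖d‖ * ‖d‖ := mul_nonneg (norm_nonneg d) (norm_nonneg d)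
    have h3 := mul_le_mul_of_nonneg_right hnorm hdn
    have h4 : g2 t - g2 0 ≤ LH * (t * ‖d‖) * (‖d‖ * ‖d‖) := le_trans key h3
    have heq : LH * (t * ‖d‖) * (‖d‖ * ‖d‖) = C * t := by rw [hCdef]; ring
    linarith [heq ▸ h4]
  have main := cubic_taylor_bound g g1 g2 C α (le_of_lt hα0) hg hg1 hC
  have hg10 : g1 0 ≤ 0 := by
    have hc0 : c 0 = x := by simp [hcdef]
    have : g1 0 = ⟪gradient m x, d⟫ := by
      rw [hg1def]
      simp only [hc0]
      rw [gradient, InnerProductSpace.toDual_symm_apply]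
    rw [this]; exact hgd
  have hg20 : g2 0 = -‖d‖ ^ 3 := by
    have hc0 : c 0 = x := by simp [hcdef]
    rw [hg2def]
    simp only [hc0]
    rw [hiter x, hcurv]
  have hgα : g α = m (x + α • d) := by simp [hgdef, hcdef]
  have hg0 : g 0 = m x := by simp [hgdef, hcdef]
  rw [hgα, hg0, hg20, hCdef] at main
  have hαs : α * (LH + η) ≤ 3 := by
    rw [le_div_iff₀ hsum] at hα1; exact hα1
  have hd3 : (0:ℝ) ≤ ‖d‖ ^ 3 := by positivity
  nlinarith [mul_le_mul_of_nonneg_left hg10 (le_of_lt hα0),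
    mul_le_mul_of_nonneg_left hαs (mul_nonneg hd3 (sq_nonneg α))]
end
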